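/- Let h : ℝ → ℝ be continuous and x : ℝ → ℝ differentiable with deriv x t = x t * h t for all t. If x 0 > 0, then x t > 0 for all t ≥ 0. -/

import Mathlib

theorem stmt_10 (h x : ℝ → ℝ) (hh : Continuous h)
    (hx : Differentiable ℝ x)
    (hderiv : ∀ t, deriv x t = x t * h t)
    (h0 : x 0 > 0) :
    ∀ t ≥ (0:ℝ), x t > 0 := by
  set H : ℝ → ℝ := fun t => ∫ s in (0:ℝ)..t, h s with hH
  have hHderiv : ∀ t, HasDerivAt H (h t) t := fun t =>
    intervalIntegral.integral_hasDerivAt_right (hh.intervalIntegrable 0 t)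
      (hh.stronglyMeasurableAtFilter _ _) hh.continuousAt
  set g : ℝ → ℝ := fun t => x t * Real.exp (-H t) with hg
  have hgderiv : ∀ t, HasDerivAt g 0 t := by
    intro t
    have h1 : HasDerivAt x (x t * h t) t := by
      have := (hx t).hasDerivAt
      rwa [hderiv t] at this
    have h2 : HasDerivAt (fun t => Real.exp (-H t)) (Real.exp (-H t) * -h t) t :=
      ((hHderiv t).neg).exp
    have : HasDerivAt g (x t * h t * Real.exp (-H t) + x t * (Real.exp (-H t) * -h t)) t := h1.mul h2
    convert this using 1
    ring
  have hconst : ∀ t, g t = g 0 := by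
    intro t
    have : ∀ s, deriv g s = 0 := fun s => (hgderiv s).deriv
    have hc := is_const_of_deriv_eq_zero (fun s => (hgderiv s).differentiableAt) this t 0
    exact hc
  intro t ht
  have := hconst t
  have hg0 : g 0 = x 0 * Real.exp (-H 0) := rfl
  have hgt : x t * Real.exp (-H t) = x 0 * Real.exp (-H 0) := this
  have hpos : x 0 * Real.exp (-H 0) > 0 := mul_pos h0 (Real.exp_pos _)
  nlinarith [Real.exp_pos (-H t), hgt, hpos]
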